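/- Let D be an irreducible k×k Metzler matrix, c > 0, μ < 0, with positive right eigenvector ξ (D ξ = μ ξ) and positive left eigenvector η (ηᵀ D = μ ηᵀ) normalized so that (ξ, η) = 1; let P be the matrix with entries P_{ij} = ξ_i η_j, and assume e^{(D − μ I)s} → P as s → ∞. Let u : [0,∞) → ℝ^k be a nonnegative solution of the cumulant system with u_0 = λ, where λ ≥ 0 and λ ≠ 0. Then e^{−μ t} u_t converges as t → ∞ to a limit of the form κ ξ with κ > 0. -/

import Mathlib

open Filter Topology



namespace Stmt11Aux
open NormedSpace

variable {k : ℕ}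

section inst
attribute [local instance] Matrix.linftyOpNormedAddCommGroup Matrix.linftyOpNormedSpace
  Matrix.linftyOpNormedRing Matrix.linftyOpNormedAlgebra

noncomputable def entryCLM (i j : Fin k) : Matrix (Fin k) (Fin k) ℝ →L[ℝ] ℝ :=
  LinearMap.toContinuousLinearMap
    { toFun := fun M => M i j, map_add' := fun _ _ => rfl, map_smul' := fun _ _ => rfl }

theorem entry_hasDerivAt (A : Matrix (Fin k) (Fin k) ℝ) (i j : Fin k) (t : ℝ) :
    HasDerivAt (fun s : ℝ => exp (s • A) i j) ((A * exp (t • A)) i j) t := by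
  have h := hasDerivAt_exp_smul_const' A t
  exact ((entryCLM i j).hasFDerivAt.comp_hasDerivAt t h :)

theorem exp_commute (A : Matrix (Fin k) (Fin k) ℝ) (t : ℝ) :
    A * exp (t • A) = exp (t • A) * A :=
  (Commute.exp_right ((Commute.refl A).smul_right t)).eq
end inst

theorem exp_smul_add (A : Matrix (Fin k) (Fin k) ℝ) (s t : ℝ) :
    exp (s • A) * exp (t • A) = exp ((s + t) • A) := by
  rw [add_smul,
    Matrix.exp_add_of_commute _ _ ((Commute.refl A).smul_left s |>.smul_right t)]

theorem exp_zero_smul (A : Matrix (Fin k) (Fin k) ℝ) : exp ((0 : ℝ) • A) = 1 := by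
  rw [zero_smul]; exact NormedSpace.exp_zero

theorem entry_continuous (A : Matrix (Fin k) (Fin k) ℝ) (i j : Fin k) :
    Continuous (fun s : ℝ => exp (s • A) i j) :=
  continuous_iff_continuousAt.2 fun t => (entry_hasDerivAt A i j t).continuousAt

theorem mulVec_norm_le (M : Matrix (Fin k) (Fin k) ℝ) (x : Fin k → ℝ) :
    ‖M.mulVec x‖ ≤ (∑ i, ∑ j, |M i j|) * ‖x‖ := by
  have hnn : (0 : ℝ) ≤ (∑ i, ∑ j, |M i j|) * ‖x‖ := by positivity
  rw [pi_norm_le_iff_of_nonneg hnn]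
  intro i
  calc ‖M.mulVec x i‖ = |∑ j, M i j * x j| := by rw [Real.norm_eq_abs]; rfl
    _ ≤ ∑ j, |M i j * x j| := Finset.abs_sum_le_sum_abs _ _
    _ ≤ ∑ j, |M i j| * ‖x‖ := Finset.sum_le_sum fun j _ => by
        rw [abs_mul]
        exact mul_le_mul_of_nonneg_left (by simpa [Real.norm_eq_abs] using norm_le_pi_norm x j)
          (abs_nonneg _)
    _ = (∑ j, |M i j|) * ‖x‖ := (Finset.sum_mul _ _ _).symm
    _ ≤ (∑ i, ∑ j, |M i j|) * ‖x‖ := by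
        refine mul_le_mul_of_nonneg_right ?_ (norm_nonneg x)
        exact Finset.single_le_sum (f := fun i => ∑ j, |M i j|)
          (fun i _ => Finset.sum_nonneg fun j _ => abs_nonneg _) (Finset.mem_univ i)

theorem hasDerivAt_exp_mul (μ t : ℝ) :
    HasDerivAt (fun s : ℝ => Real.exp (μ * s)) (μ * Real.exp (μ * t)) t := by
  have hmu : HasDerivAt (fun s : ℝ => μ * s) μ t := by
    simpa using (hasDerivAt_id t).const_mul μ
  simpa [Function.comp_def, mul_comm] using (Real.hasDerivAt_exp (μ * t)).comp t hmu

theorem continuous_exp_mul (μ : ℝ) : Continuous (fun s : ℝ => Real.exp (μ * s)) :=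
  continuous_iff_continuousAt.2 fun t => (hasDerivAt_exp_mul μ t).continuousAt

theorem integral_exp_mul {μ : ℝ} (hμ : μ ≠ 0) (a b : ℝ) :
    ∫ s in a..b, Real.exp (μ * s) = (Real.exp (μ * b) - Real.exp (μ * a)) / μ := by
  have hd : ∀ x ∈ Set.uIcc a b, HasDerivAt (fun s => Real.exp (μ * s) / μ)
      (Real.exp (μ * x)) x := by
    intro x _
    have h3 := (hasDerivAt_exp_mul μ x).div_const μ
    exact h3.congr_deriv (mul_div_cancel_left₀ _ hμ)
  rw [intervalIntegral.integral_eq_sub_of_hasDerivAt hd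
    ((continuous_exp_mul μ).intervalIntegrable a b)]
  ring

theorem intExp_le {μ ν : ℝ} (hμν : μ = -ν) (hν : 0 < ν) (a b : ℝ) :
    ∫ s in a..b, Real.exp (μ * s) ≤ Real.exp (μ * a) / ν := by
  have hμ : μ ≠ 0 := by rw [hμν]; exact neg_ne_zero.2 (ne_of_gt hν)
  rw [integral_exp_mul hμ]
  have h1 : (Real.exp (μ * b) - Real.exp (μ * a)) / μ
      = (Real.exp (μ * a) - Real.exp (μ * b)) / ν := by
    rw [hμν, div_neg, ← neg_div, neg_sub]
  rw [h1]
  exact (div_le_div_iff_of_pos_right hν).mpr (by nlinarith [Real.exp_pos (μ * b)])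

theorem mulVec_continuousOn' (M : ℝ → Matrix (Fin k) (Fin k) ℝ)
    (hM : ∀ i j, Continuous fun s => M s i j)
    (g : ℝ → Fin k → ℝ) {S : Set ℝ} (hg : ContinuousOn g S) :
    ContinuousOn (fun s => (M s).mulVec (g s)) S := by
  have : ∀ i, ContinuousOn (fun s => ∑ j, M s i j * g s j) S := by
    intro i
    refine continuousOn_finset_sum _ fun j _ => ContinuousOn.mul (hM i j).continuousOn ?_
    exact (continuous_apply j).comp_continuousOn hg
  exact continuousOn_pi.2 this

theorem duhamel (A : Matrix (Fin k) (Fin k) ℝ) (y g : ℝ → Fin k → ℝ)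
    (hy : ∀ t ∈ Set.Ici (0 : ℝ), HasDerivAt y (A.mulVec (y t) - g t) t)
    (hg : ContinuousOn g (Set.Ici 0))
    {t : ℝ} (ht : 0 ≤ t) :
    y t = (exp (t • A)).mulVec (y 0)
      - ∫ s in (0 : ℝ)..t, (exp ((t - s) • A)).mulVec (g s) := by
  set E : ℝ → Matrix (Fin k) (Fin k) ℝ := fun s => exp (s • A) with hE
  have hEneg : ∀ (i j : Fin k) (s : ℝ),
      HasDerivAt (fun r : ℝ => E (-r) i j) (-((A * E (-s)) i j)) s := by
    intro i j s
    have h1 := (entry_hasDerivAt A i j (-s)).comp s (hasDerivAt_neg s)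
    have h2 : HasDerivAt (fun r : ℝ => E (-r) i j) ((A * E (-s)) i j * (-1)) s := h1
    simpa [mul_neg_one] using h2
  set w : ℝ → Fin k → ℝ := fun s => (E (-s)).mulVec (y s) with hw
  have hwd : ∀ s ∈ Set.Icc (0 : ℝ) t,
      HasDerivAt w (-((E (-s)).mulVec (g s))) s := by
    intro s hs
    have hys := hy s hs.1
    have hcomp : ∀ i : Fin k, HasDerivAt (fun r => w r i)
        ((-((E (-s)).mulVec (g s))) i) s := by
      intro i
      have hsum : HasDerivAt (fun r => ∑ j, E (-r) i j * y r j)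
          (∑ j, (-((A * E (-s)) i j) * y s j
            + E (-s) i j * ((A.mulVec (y s) - g s) j))) s := by
        refine HasDerivAt.fun_sum fun j _ => ?_
        exact (hEneg i j s).mul (hasDerivAt_pi.1 hys j)
      have heq : (∑ j, (-((A * E (-s)) i j) * y s j
            + E (-s) i j * ((A.mulVec (y s) - g s) j)))
          = (-((E (-s)).mulVec (g s))) i := by
        have hc : (E (-s)) * A = A * E (-s) := (exp_commute A (-s)).symm
        have h1 : ∑ j, E (-s) i j * (A.mulVec (y s)) j = ((E (-s)) * A).mulVec (y s) i := by
          rw [← Matrix.mulVec_mulVec]; rfl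
        calc ∑ j, (-((A * E (-s)) i j) * y s j
              + E (-s) i j * ((A.mulVec (y s) - g s) j))
            = -(∑ j, (A * E (-s)) i j * y s j)
              + (∑ j, E (-s) i j * (A.mulVec (y s)) j - ∑ j, E (-s) i j * g s j) := by
              simp [Finset.sum_add_distrib, Finset.sum_sub_distrib, Pi.sub_apply, mul_sub,
                Finset.sum_neg_distrib]
          _ = -(((A * E (-s)).mulVec (y s)) i)
              + (((E (-s)) * A).mulVec (y s) i - ((E (-s)).mulVec (g s)) i) := by
              rw [h1]; rfl
          _ = (-((E (-s)).mulVec (g s))) i := by rw [hc, Pi.neg_apply]; ring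
      exact heq ▸ hsum
    exact hasDerivAt_pi.2 hcomp
  have hgint : IntervalIntegrable (fun s => -((E (-s)).mulVec (g s)))
      MeasureTheory.volume 0 t := by
    apply ContinuousOn.intervalIntegrable
    rw [Set.uIcc_of_le ht]
    exact (((mulVec_continuousOn' (fun s => E (-s))
      (fun i j => (entry_continuous A i j).comp continuous_neg) g hg).mono
      Set.Icc_subset_Ici_self).neg)
  have hftc := intervalIntegral.integral_eq_sub_of_hasDerivAt
    (f := w) (f' := fun s => -((E (-s)).mulVec (g s)))
    (fun s hs => hwd s (by rwa [Set.uIcc_of_le ht] at hs)) hgint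
  have hw0 : w 0 = y 0 := by
    show (E (-0)).mulVec (y 0) = y 0
    rw [neg_zero]
    show (exp ((0 : ℝ) • A)).mulVec (y 0) = y 0
    rw [exp_zero_smul, Matrix.one_mulVec]
  rw [intervalIntegral.integral_neg, hw0] at hftc
  have hwt : w t = y 0 - ∫ s in (0 : ℝ)..t, (E (-s)).mulVec (g s) := by
    have h2 := sub_eq_iff_eq_add.mp hftc.symm
    rw [h2]; abel
  have hinv : (E t).mulVec (w t) = y t := by
    show (E t).mulVec ((E (-t)).mulVec (y t)) = y t
    rw [Matrix.mulVec_mulVec, exp_smul_add A t (-t), add_neg_cancel, exp_zero_smul,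
      Matrix.one_mulVec]
  have hintg : IntervalIntegrable (fun s => (E (-s)).mulVec (g s))
      MeasureTheory.volume 0 t := by
    apply ContinuousOn.intervalIntegrable
    rw [Set.uIcc_of_le ht]
    exact ((mulVec_continuousOn' (fun s => E (-s))
      (fun i j => (entry_continuous A i j).comp continuous_neg) g hg).mono
      Set.Icc_subset_Ici_self)
  have hcomm2 : (E t).mulVec (∫ s in (0 : ℝ)..t, (E (-s)).mulVec (g s))
      = ∫ s in (0 : ℝ)..t, (E t).mulVec ((E (-s)).mulVec (g s)) := by
    have := ((Matrix.mulVecLin (E t)).toContinuousLinearMap).intervalIntegral_comp_comm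
      (𝕜 := ℝ) hintg
    exact this.symm
  have hptw : (fun s => (E t).mulVec ((E (-s)).mulVec (g s)))
      = fun s => (E (t - s)).mulVec (g s) := by
    funext s
    rw [Matrix.mulVec_mulVec, exp_smul_add A t (-s), ← sub_eq_add_neg]
  rw [← hinv, hwt, Matrix.mulVec_sub, hcomm2, hptw]

theorem comp_bound (c μ : ℝ) (hc : 0 ≤ c)
    (D : Matrix (Fin k) (Fin k) ℝ)
    (hMetzler : ∀ i j : Fin k, i ≠ j → 0 ≤ D i j)
    (ξ : Fin k → ℝ) (hξpos : ∀ i, 0 < ξ i) (hright : D.mulVec ξ = μ • ξ)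
    (u : ℝ → Fin k → ℝ)
    (husol : ∀ t ∈ Set.Ici (0 : ℝ),
      HasDerivAt u (D.mulVec (u t) - (c / 2) • (u t * u t)) t)
    (C : ℝ) (hC0 : ∀ i, u 0 i < C * ξ i) :
    ∀ t, 0 ≤ t → ∀ i, u t i < C * Real.exp (μ * t) * ξ i := by
  set z : ℝ → Fin k → ℝ := fun t i => C * Real.exp (μ * t) * ξ i - u t i with hzdef
  have hucont : ∀ t ∈ Set.Ici (0 : ℝ), ContinuousAt u t := fun t ht => (husol t ht).continuousAt
  have hzcont : ∀ i, ContinuousOn (fun t => z t i) (Set.Ici 0) := by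
    intro i t ht
    have h1 : Continuous fun t : ℝ => C * Real.exp (μ * t) * ξ i :=
      (continuous_const.mul (continuous_exp_mul μ)).mul continuous_const
    exact (h1.continuousAt.sub
      ((continuous_apply i).continuousAt.comp (hucont t ht))).continuousWithinAt
  have hzd : ∀ t ∈ Set.Ici (0 : ℝ), ∀ i, HasDerivAt (fun s => z s i)
      ((D.mulVec (z t)) i + (c / 2) * (u t i * u t i)) t := by
    intro t ht i
    have h1 : HasDerivAt (fun s : ℝ => C * Real.exp (μ * s) * ξ i)
        (C * (μ * Real.exp (μ * t)) * ξ i) t :=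
      ((hasDerivAt_exp_mul μ t).const_mul C).mul_const (ξ i)
    have h2 : HasDerivAt (fun s => u s i)
        ((D.mulVec (u t)) i - (c / 2) * (u t i * u t i)) t := by
      have := hasDerivAt_pi.1 (husol t ht) i
      simpa [Pi.sub_apply, Pi.smul_apply, Pi.mul_apply, smul_eq_mul] using this
    have h3 := h1.sub h2
    have heq : C * (μ * Real.exp (μ * t)) * ξ i
          - ((D.mulVec (u t)) i - c / 2 * (u t i * u t i))
        = (D.mulVec (z t)) i + (c / 2) * (u t i * u t i) := by
      have hD : (D.mulVec (z t)) i
          = C * Real.exp (μ * t) * (D.mulVec ξ) i - (D.mulVec (u t)) i := by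
        simp only [hzdef, Matrix.mulVec, dotProduct, Finset.mul_sum,
          ← Finset.sum_sub_distrib]
        exact Finset.sum_congr rfl fun j _ => by ring
      rw [hD, hright]
      simp only [Pi.smul_apply, smul_eq_mul]
      ring
    exact heq ▸ h3
  have key : ∀ t, 0 ≤ t → ∀ i, 0 < z t i := by
    by_contra hcon
    push_neg at hcon
    obtain ⟨t0, ht0, i0, hi0⟩ := hcon
    set S : Set ℝ := ⋃ i : Fin k, {t | 0 ≤ t ∧ z t i ≤ 0} with hSdef
    have hSne : S.Nonempty := ⟨t0, Set.mem_iUnion.2 ⟨i0, ht0, hi0⟩⟩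
    have hSbdd : BddBelow S := ⟨0, fun x hx => by
      obtain ⟨i, hi⟩ := Set.mem_iUnion.1 hx; exact hi.1⟩
    have hSclosed : IsClosed S := by
      apply isClosed_iUnion_of_finite
      intro i
      have : {t : ℝ | 0 ≤ t ∧ z t i ≤ 0}
          = Set.Ici 0 ∩ (fun t => z t i) ⁻¹' Set.Iic 0 := by
        ext x; simp [Set.mem_Ici, Set.mem_Iic]
      rw [this]
      exact (hzcont i).preimage_isClosed_of_isClosed isClosed_Ici isClosed_Iic
    set τ := sInf S with hτdef
    have hτS : τ ∈ S := hSclosed.csInf_mem hSne hSbdd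
    obtain ⟨i, hτmem⟩ := Set.mem_iUnion.1 hτS
    have hτ0 : 0 ≤ τ := hτmem.1
    have hz0 : ∀ j, 0 < z 0 j := by
      intro j
      have := hC0 j
      simp only [hzdef, mul_zero, Real.exp_zero, mul_one]
      linarith
    have hτpos : 0 < τ := by
      rcases lt_or_eq_of_le hτ0 with h | h
      · exact h
      · exact absurd hτmem.2 (not_le.2 (by rw [← h]; exact hz0 i))
    have hpos : ∀ s, 0 ≤ s → s < τ → ∀ j, 0 < z s j := by
      intro s hs0 hsτ j
      by_contra hle
      push_neg at hle
      exact absurd (csInf_le hSbdd (Set.mem_iUnion.2 ⟨j, hs0, hle⟩)) (not_le.2 hsτ)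
    have hnonnegτ : ∀ j, 0 ≤ z τ j := by
      intro j
      by_contra hneg
      push_neg at hneg
      have hne : (𝓝[Set.Ioo (0 : ℝ) τ] τ).NeBot := by
        apply mem_closure_iff_nhdsWithin_neBot.mp
        rw [closure_Ioo (ne_of_lt hτpos)]
        exact Set.right_mem_Icc.2 hτ0
      have htend : Tendsto (fun s => z s j) (𝓝[Set.Ioo (0 : ℝ) τ] τ) (𝓝 (z τ j)) :=
        ((hzcont j).continuousWithinAt hτ0).mono_left
          (nhdsWithin_mono τ (fun x hx => hx.1.le))
      have hev := htend.eventually_lt_const hneg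
      obtain ⟨s, hs1, hs2⟩ := (hev.and eventually_mem_nhdsWithin).exists
      exact absurd hs1 (not_lt.2 (hpos s hs2.1.le hs2.2 j).le)
    have hziτ : z τ i = 0 := le_antisymm hτmem.2 (hnonnegτ i)
    set gf : ℝ → ℝ := fun s => z s i * Real.exp (-(D i i) * s) with hgf
    have hgd : ∀ s, 0 ≤ s → HasDerivAt gf
        ((((D.mulVec (z s)) i + (c / 2) * (u s i * u s i)) * Real.exp (-(D i i) * s))
          + z s i * (-(D i i) * Real.exp (-(D i i) * s))) s := by
      intro s hs
      exact (hzd s hs i).mul (hasDerivAt_exp_mul (-(D i i)) s)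
    have hgmono : MonotoneOn gf (Set.Icc 0 τ) := by
      apply monotoneOn_of_deriv_nonneg (convex_Icc 0 τ)
      · exact (ContinuousOn.mul ((hzcont i).mono Set.Icc_subset_Ici_self)
          (continuous_exp_mul (-(D i i))).continuousOn)
      · intro s hs
        rw [interior_Icc] at hs
        exact (hgd s hs.1.le).differentiableAt.differentiableWithinAt
      · intro s hs
        rw [interior_Icc] at hs
        rw [(hgd s hs.1.le).deriv]
        have hzs : ∀ j, 0 ≤ z s j := fun j => (hpos s hs.1.le hs.2 j).le
        have hrow : 0 ≤ (D.mulVec (z s)) i - D i i * z s i := by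
          have h5 : (D.mulVec (z s)) i = ∑ j, D i j * z s j := rfl
          rw [h5, ← Finset.sum_erase_add _ _ (Finset.mem_univ i), add_sub_cancel_right]
          exact Finset.sum_nonneg fun j hj =>
            mul_nonneg (hMetzler i j (Finset.ne_of_mem_erase hj).symm) (hzs j)
        have hcu : 0 ≤ c / 2 * (u s i * u s i) := mul_nonneg (by linarith) (mul_self_nonneg _)
        have hexp : 0 < Real.exp (-(D i i) * s) := Real.exp_pos _
        nlinarith [mul_nonneg (add_nonneg hrow hcu) hexp.le]
    have h0τ : gf 0 ≤ gf τ := hgmono (Set.left_mem_Icc.2 hτ0) (Set.right_mem_Icc.2 hτ0) hτ0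
    have hgfτ : gf τ = 0 := by simp [hgf, hziτ]
    have hgf0 : (0 : ℝ) < gf 0 := mul_pos (hz0 i) (Real.exp_pos _)
    rw [hgfτ] at h0τ
    linarith
  intro t ht i
  have := key t ht i
  simp only [hzdef] at this
  linarith

end Stmt11Aux


set_option maxHeartbeats 2000000 in
open Stmt11Aux in
/-- (From the proof of Theorem 3.5 of the paper.) In the subcritical
irreducible case `μ < 0`, with positive right/left eigenvectors `ξ, η` of `D`,
`(ξ,η) = 1`, `P = ξ ηᵀ` and `e^{(D−μI)s} → P` as `s → ∞`, if `u` is a nonnegative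
solution of the cumulant system with `u_0 = λ ≥ 0`, `λ ≠ 0`, then `e^{−μt} u_t`
converges as `t → ∞` to `κ ξ` for some `κ > 0`. -/
theorem stmt11 (k : ℕ) (hk : 1 ≤ k) (c : ℝ) (hc : 0 < c)
    (D : Matrix (Fin k) (Fin k) ℝ)
    (hMetzler : ∀ i j : Fin k, i ≠ j → 0 ≤ D i j)
    (hirr : ∀ J : Finset (Fin k), J.Nonempty → J ≠ Finset.univ →
      ∃ j ∈ J, ∃ i ∉ J, 0 < D j i)
    (μ : ℝ) (hμ : μ < 0)
    (ξ η : Fin k → ℝ) (hξpos : ∀ i, 0 < ξ i) (hηpos : ∀ i, 0 < η i)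
    (hright : D.mulVec ξ = μ • ξ) (hleft : D.vecMul η = μ • η)
    (hnormal : ∑ i, ξ i * η i = 1)
    (P : Matrix (Fin k) (Fin k) ℝ) (hP : ∀ i j, P i j = ξ i * η j)
    (hconv : Tendsto
      (fun s : ℝ => NormedSpace.exp (s • (D - μ • (1 : Matrix (Fin k) (Fin k) ℝ))))
      atTop (𝓝 P))
    (lam : Fin k → ℝ) (hlam : ∀ i, 0 ≤ lam i) (hlam0 : lam ≠ 0)
    (u : ℝ → Fin k → ℝ)
    (husol : ∀ t ∈ Set.Ici (0 : ℝ),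
      HasDerivAt u (D.mulVec (u t) - (c / 2) • (u t * u t)) t)
    (hunonneg : ∀ t ∈ Set.Ici (0 : ℝ), ∀ i : Fin k, 0 ≤ u t i)
    (huinit : u 0 = lam) :
    ∃ κ : ℝ, 0 < κ ∧
      Tendsto (fun t : ℝ => Real.exp (-(μ * t)) • u t) atTop (𝓝 (κ • ξ)) := by
  haveI : Nonempty (Fin k) := Fin.pos_iff_nonempty.mp hk
  have hν : (0 : ℝ) < -μ := by linarith
  set ν : ℝ := -μ with hνdef
  have hμν : μ = -ν := by rw [hνdef]; ring
  set A := D - μ • (1 : Matrix (Fin k) (Fin k) ℝ) with hA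
  set E : ℝ → Matrix (Fin k) (Fin k) ℝ := fun s => NormedSpace.exp (s • A) with hEdef
  set y : ℝ → Fin k → ℝ := fun t => Real.exp (-(μ * t)) • u t with hydef
  set g : ℝ → Fin k → ℝ := fun s => Real.exp (-(μ * s)) • ((c / 2) • (u s * u s)) with hgdef
  have hucont : ∀ t ∈ Set.Ici (0 : ℝ), ContinuousAt u t := fun t ht => (husol t ht).continuousAt
  have econt : Continuous fun s : ℝ => Real.exp (-(μ * s)) := by
    simpa [neg_mul] using continuous_exp_mul (-μ)
  -- derivative of y
  have hyd : ∀ t ∈ Set.Ici (0 : ℝ), HasDerivAt y (A.mulVec (y t) - g t) t := by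
    intro t ht
    have hr : HasDerivAt (fun s : ℝ => Real.exp (-(μ * s))) (-μ * Real.exp (-(μ * t))) t := by
      simpa [neg_mul] using hasDerivAt_exp_mul (-μ) t
    have h := hr.smul (husol t ht)
    have h1 : A.mulVec (y t) = Real.exp (-(μ * t)) • D.mulVec (u t) - μ • y t := by
      have h2 : D.mulVec (y t) = Real.exp (-(μ * t)) • D.mulVec (u t) := by
        simp only [hydef]
        exact Matrix.mulVec_smul D _ (u t)
      rw [hA, Matrix.sub_mulVec, Matrix.smul_mulVec, Matrix.one_mulVec, h2]
    refine h.congr_deriv ?_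
    rw [h1]
    funext i
    simp only [hydef, hgdef, Pi.smul_apply, Pi.sub_apply, Pi.add_apply, smul_eq_mul,
      Pi.mul_apply]
    ring
  -- continuity of g
  have hgcont : ContinuousOn g (Set.Ici 0) := by
    intro t ht
    exact (econt.continuousAt.smul
      (((hucont t ht).mul (hucont t ht)).const_smul (c / 2))).continuousWithinAt
  -- the comparison constant
  set C : ℝ := 1 + Finset.univ.sup' Finset.univ_nonempty (fun i => lam i / ξ i) with hCdef
  have hsup0 : 0 ≤ Finset.univ.sup' Finset.univ_nonempty (fun i => lam i / ξ i) := by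
    obtain ⟨j⟩ := (inferInstance : Nonempty (Fin k))
    exact le_trans (div_nonneg (hlam j) (hξpos j).le)
      (Finset.le_sup' (f := fun i => lam i / ξ i) (Finset.mem_univ j))
  have hCpos : 0 < C := by rw [hCdef]; linarith
  have hcompare : ∀ t, 0 ≤ t → ∀ i, u t i < C * Real.exp (μ * t) * ξ i := by
    apply comp_bound c μ hc.le D hMetzler ξ hξpos hright u husol C
    intro i
    rw [huinit]
    have h1 : lam i / ξ i ≤ Finset.univ.sup' Finset.univ_nonempty (fun i => lam i / ξ i) :=
      Finset.le_sup' (f := fun i => lam i / ξ i) (Finset.mem_univ i)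
    have h2 : lam i / ξ i < C := by rw [hCdef]; linarith
    calc lam i = lam i / ξ i * ξ i := (div_mul_cancel₀ _ (ne_of_gt (hξpos i))).symm
      _ < C * ξ i := by exact mul_lt_mul_of_pos_right h2 (hξpos i)
  set Ξ : ℝ := Finset.univ.sup' Finset.univ_nonempty ξ with hΞdef
  have hΞ : ∀ i, ξ i ≤ Ξ := fun i => Finset.le_sup' _ (Finset.mem_univ i)
  have hΞpos : 0 < Ξ := lt_of_lt_of_le (hξpos (Classical.arbitrary _)) (hΞ _)
  -- upper bound on u
  have hub : ∀ s, 0 ≤ s → ∀ i, u s i ≤ C * Real.exp (μ * s) * Ξ := by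
    intro s hs i
    refine le_trans (hcompare s hs i).le ?_
    have he := Real.exp_pos (μ * s)
    exact mul_le_mul_of_nonneg_left (hΞ i) (mul_nonneg hCpos.le he.le)
  -- norm bound on g
  set K : ℝ := c / 2 * (C * Ξ) ^ 2 with hKdef
  have hK0 : 0 ≤ K := by rw [hKdef]; positivity
  have hee : ∀ s : ℝ, Real.exp (-(μ * s)) * Real.exp (μ * s) = 1 := by
    intro s; rw [← Real.exp_add]; simp
  have hgb : ∀ s, 0 ≤ s → ‖g s‖ ≤ K * Real.exp (μ * s) := by
    intro s hs
    rw [pi_norm_le_iff_of_nonneg (mul_nonneg hK0 (Real.exp_pos _).le)]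
    intro i
    have h1 : g s i = Real.exp (-(μ * s)) * (c / 2 * (u s i * u s i)) := rfl
    have hu0 := hunonneg s hs i
    have hub' := hub s hs i
    have he := Real.exp_pos (μ * s)
    have he' := Real.exp_pos (-(μ * s))
    have h2 := hee s
    rw [Real.norm_eq_abs, h1, abs_of_nonneg (mul_nonneg he'.le
      (mul_nonneg (by linarith) (mul_self_nonneg _)))]
    have h3 : u s i * u s i ≤ (C * Real.exp (μ * s) * Ξ) * (C * Real.exp (μ * s) * Ξ) :=
      mul_le_mul hub' hub' hu0 (mul_nonneg (mul_nonneg hCpos.le he.le) hΞpos.le)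
    have h4 : Real.exp (-(μ * s)) * (c / 2 * (u s i * u s i))
        ≤ Real.exp (-(μ * s)) * (c / 2 * ((C * Real.exp (μ * s) * Ξ) * (C * Real.exp (μ * s) * Ξ))) :=
      mul_le_mul_of_nonneg_left (mul_le_mul_of_nonneg_left h3 (by linarith)) he'.le
    have h5 : Real.exp (-(μ * s)) * (c / 2 * ((C * Real.exp (μ * s) * Ξ) * (C * Real.exp (μ * s) * Ξ)))
        = K * Real.exp (μ * s) := by
      rw [hKdef]
      linear_combination (c / 2 * (C * Ξ) ^ 2 * Real.exp (μ * s)) * h2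
    linarith [h4.trans_eq h5]
  -- integrability of g on (0,∞)
  have hgint : MeasureTheory.IntegrableOn g (Set.Ioi 0) MeasureTheory.volume := by
    have hbint : MeasureTheory.IntegrableOn (fun s => K * Real.exp (μ * s))
        (Set.Ioi 0) MeasureTheory.volume := by
      have h := exp_neg_integrableOn_Ioi 0 hν
      have heq : (fun s : ℝ => K * Real.exp (μ * s)) = fun s => K * Real.exp (-ν * s) := by
        funext s; rw [hμν]
      rw [heq]
      exact h.const_mul K
    apply MeasureTheory.Integrable.mono' hbint
    · exact (hgcont.mono Set.Ioi_subset_Ici_self).aestronglyMeasurable measurableSet_Ioi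
    · rw [MeasureTheory.ae_restrict_iff' measurableSet_Ioi]
      exact MeasureTheory.ae_of_all _ fun s hs => hgb s (le_of_lt hs)
  set Iinf : Fin k → ℝ := ∫ s in Set.Ioi (0 : ℝ), g s with hIdef
  have hHt : Tendsto (fun t : ℝ => ∫ s in (0 : ℝ)..t, g s) atTop (𝓝 Iinf) :=
    MeasureTheory.intervalIntegral_tendsto_integral_Ioi 0 hgint tendsto_id
  -- Duhamel representation
  have hy0 : y 0 = lam := by
    simp [hydef, huinit]
  have hduh : ∀ t, 0 ≤ t → y t = (E t).mulVec lam
      - ∫ s in (0 : ℝ)..t, (E (t - s)).mulVec (g s) := by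
    intro t ht
    have := duhamel A y g hyd hgcont ht
    rwa [hy0] at this
  -- entrywise convergence of E to P
  have hEP : ∀ i j, Tendsto (fun s => E s i j) atTop (𝓝 (P i j)) := by
    intro i j
    exact (Continuous.tendsto ((continuous_apply j).comp (continuous_apply i)) P).comp hconv
  have hT1 : Tendsto (fun t => (E t).mulVec lam) atTop (𝓝 (P.mulVec lam)) := by
    refine tendsto_pi_nhds.2 fun i => ?_
    have h := tendsto_finset_sum Finset.univ
      (fun j (_ : j ∈ Finset.univ) => (hEP i j).mul_const (lam j))
    simpa [Matrix.mulVec, dotProduct] using h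
  -- the φ function
  set φ : ℝ → ℝ := fun r => ∑ i, ∑ j, |E r i j - P i j| with hφdef
  have hφ0 : Tendsto φ atTop (𝓝 0) := by
    have h := tendsto_finset_sum (Finset.univ (α := Fin k))
      (fun i _ => tendsto_finset_sum (Finset.univ (α := Fin k))
        (fun j _ => (((hEP i j).sub_const (P i j)).abs)))
    simpa using h
  have hφnn : ∀ r, 0 ≤ φ r := fun r =>
    Finset.sum_nonneg fun i _ => Finset.sum_nonneg fun j _ => abs_nonneg _
  have hφc : Continuous φ := by
    refine continuous_finset_sum _ fun i _ => continuous_finset_sum _ fun j _ => ?_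
    exact ((entry_continuous A i j).sub continuous_const).abs
  -- boundedness of φ on [0,∞)
  obtain ⟨B, hB0, hB⟩ : ∃ B, 0 ≤ B ∧ ∀ r, 0 ≤ r → φ r ≤ B := by
    have h1 : ∀ᶠ r in atTop, φ r < 1 := hφ0.eventually_lt_const one_pos
    obtain ⟨T, hT⟩ := eventually_atTop.1 h1
    obtain ⟨x0, hx0, hx0max⟩ := (isCompact_Icc (a := (0 : ℝ)) (b := max T 0)).exists_isMaxOn
      (Set.nonempty_Icc.2 (le_max_right T 0)) hφc.continuousOn
    refine ⟨max (φ x0) 1, le_trans zero_le_one (le_max_right _ _), fun r hr => ?_⟩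
    rcases le_total r (max T 0) with h | h
    · exact le_trans (hx0max (⟨hr, h⟩ : r ∈ Set.Icc (0:ℝ) (max T 0))) (le_max_left _ _)
    · exact le_trans (hT r (le_trans (le_max_left T 0) h)).le (le_max_right _ _)
  -- pointwise norm bound
  have hbnd : ∀ t s, 0 ≤ s → ‖((E (t - s)) - P).mulVec (g s)‖
      ≤ φ (t - s) * (K * Real.exp (μ * s)) := by
    intro t s hs
    refine le_trans (mulVec_norm_le _ _) ?_
    exact mul_le_mul_of_nonneg_left (hgb s hs) (hφnn _)
  -- interval integrabilities
  have hcontEg : ∀ t : ℝ, ContinuousOn (fun s => ((E (t - s)) - P).mulVec (g s)) (Set.Ici 0) := by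
    intro t
    apply mulVec_continuousOn'
    · intro i j
      exact ((entry_continuous A i j).comp (continuous_const.sub continuous_id)).sub
        continuous_const
    · exact hgcont
  have hcontPg : ContinuousOn (fun s => P.mulVec (g s)) (Set.Ici 0) :=
    mulVec_continuousOn' (fun _ => P) (fun i j => continuous_const) g hgcont
  have hcontE2g : ∀ t : ℝ, ContinuousOn (fun s => (E (t - s)).mulVec (g s)) (Set.Ici 0) := by
    intro t
    apply mulVec_continuousOn'
    · intro i j
      exact (entry_continuous A i j).comp (continuous_const.sub continuous_id)
    · exact hgcont
  -- splitting
  have hsplit : ∀ t, 0 ≤ t → (∫ s in (0 : ℝ)..t, (E (t - s)).mulVec (g s))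
      = (∫ s in (0 : ℝ)..t, ((E (t - s)) - P).mulVec (g s))
        + P.mulVec (∫ s in (0 : ℝ)..t, g s) := by
    intro t ht
    have hInt1 : IntervalIntegrable (fun s => ((E (t - s)) - P).mulVec (g s))
        MeasureTheory.volume 0 t := by
      apply ContinuousOn.intervalIntegrable
      rw [Set.uIcc_of_le ht]
      exact (hcontEg t).mono Set.Icc_subset_Ici_self
    have hInt2 : IntervalIntegrable (fun s => P.mulVec (g s)) MeasureTheory.volume 0 t := by
      apply ContinuousOn.intervalIntegrable
      rw [Set.uIcc_of_le ht]
      exact hcontPg.mono Set.Icc_subset_Ici_self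
    have hgintt : IntervalIntegrable g MeasureTheory.volume 0 t := by
      apply ContinuousOn.intervalIntegrable
      rw [Set.uIcc_of_le ht]
      exact hgcont.mono Set.Icc_subset_Ici_self
    have hptw : ∀ s : ℝ, (E (t - s)).mulVec (g s)
        = ((E (t - s)) - P).mulVec (g s) + P.mulVec (g s) := by
      intro s; rw [Matrix.sub_mulVec, sub_add_cancel]
    have h3 : (∫ s in (0 : ℝ)..t, P.mulVec (g s)) = P.mulVec (∫ s in (0 : ℝ)..t, g s) :=
      ((Matrix.mulVecLin P).toContinuousLinearMap).intervalIntegral_comp_comm (𝕜 := ℝ) hgintt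
    calc (∫ s in (0 : ℝ)..t, (E (t - s)).mulVec (g s))
        = ∫ s in (0 : ℝ)..t, (((E (t - s)) - P).mulVec (g s) + P.mulVec (g s)) := by
          simp only [hptw]
      _ = (∫ s in (0 : ℝ)..t, ((E (t - s)) - P).mulVec (g s))
          + ∫ s in (0 : ℝ)..t, P.mulVec (g s) := intervalIntegral.integral_add hInt1 hInt2
      _ = (∫ s in (0 : ℝ)..t, ((E (t - s)) - P).mulVec (g s))
          + P.mulVec (∫ s in (0 : ℝ)..t, g s) := by rw [h3]
  -- the error term tends to 0
  have hG : Tendsto (fun t => ∫ s in (0 : ℝ)..t, ((E (t - s)) - P).mulVec (g s))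
      atTop (𝓝 0) := by
    rw [NormedAddCommGroup.tendsto_nhds_zero]
    intro ε hε
    set ε' : ℝ := ε * ν / (2 * (K + 1)) with hε'def
    have hε' : 0 < ε' := div_pos (mul_pos hε hν) (by linarith)
    obtain ⟨T₁, hT₁⟩ := eventually_atTop.1 (hφ0.eventually_lt_const hε')
    have hexp2 : Tendsto (fun t : ℝ => B * K * Real.exp (μ * (t / 2)) / ν) atTop (𝓝 0) := by
      have h2 : Tendsto (fun t : ℝ => Real.exp (μ * (t / 2))) atTop (𝓝 0) := by
        have h3 : Tendsto (fun t : ℝ => ν / 2 * t) atTop atTop :=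
          Tendsto.const_mul_atTop (by linarith) tendsto_id
        have h4 := Real.tendsto_exp_neg_atTop_nhds_zero.comp h3
        have h5 : (fun t : ℝ => Real.exp (-(ν / 2 * t))) = fun t => Real.exp (μ * (t / 2)) := by
          funext t; congr 1; rw [hμν]; ring
        rw [← h5]
        exact h4
      have h6 := (h2.const_mul (B * K)).div_const ν
      simpa using h6
    have h6 : ∀ᶠ t : ℝ in atTop, B * K * Real.exp (μ * (t / 2)) / ν < ε / 2 :=
      hexp2.eventually_lt_const (by linarith)
    filter_upwards [eventually_ge_atTop (max (2 * T₁) 0), h6] with t ht hlt2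
    have ht0 : (0 : ℝ) ≤ t := le_trans (le_max_right _ _) ht
    have htT : 2 * T₁ ≤ t := le_trans (le_max_left _ _) ht
    have ht2 : (0 : ℝ) ≤ t / 2 := by linarith
    have ht22 : t / 2 ≤ t := by linarith
    set b : ℝ → ℝ := fun s => ‖((E (t - s)) - P).mulVec (g s)‖ with hbdef
    have hbc : ContinuousOn b (Set.Ici 0) := (hcontEg t).norm
    have hI1 : IntervalIntegrable b MeasureTheory.volume 0 (t / 2) := by
      apply ContinuousOn.intervalIntegrable
      rw [Set.uIcc_of_le ht2]
      exact hbc.mono Set.Icc_subset_Ici_self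
    have hI2 : IntervalIntegrable b MeasureTheory.volume (t / 2) t := by
      apply ContinuousOn.intervalIntegrable
      rw [Set.uIcc_of_le ht22]
      exact hbc.mono fun x hx => le_trans ht2 hx.1
    have hIe1 : IntervalIntegrable (fun s => ε' * (K * Real.exp (μ * s)))
        MeasureTheory.volume 0 (t / 2) :=
      (Continuous.intervalIntegrable (continuous_const.mul
        (continuous_const.mul (continuous_exp_mul μ))) _ _)
    have hIe2 : IntervalIntegrable (fun s => B * (K * Real.exp (μ * s)))
        MeasureTheory.volume (t / 2) t :=
      (Continuous.intervalIntegrable (continuous_const.mul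
        (continuous_const.mul (continuous_exp_mul μ))) _ _)
    have hIn : ‖∫ s in (0 : ℝ)..t, ((E (t - s)) - P).mulVec (g s)‖
        ≤ ∫ s in (0 : ℝ)..t, b s :=
      intervalIntegral.norm_integral_le_integral_norm ht0
    have hadd : (∫ s in (0 : ℝ)..t, b s)
        = (∫ s in (0 : ℝ)..(t / 2), b s) + ∫ s in (t / 2)..t, b s :=
      (intervalIntegral.integral_add_adjacent_intervals hI1 hI2).symm
    have hmono1 : (∫ s in (0 : ℝ)..(t / 2), b s)
        ≤ ∫ s in (0 : ℝ)..(t / 2), ε' * (K * Real.exp (μ * s)) := by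
      apply intervalIntegral.integral_mono_on ht2 hI1 hIe1
      intro s hs
      refine le_trans (hbnd t s hs.1) ?_
      have hφle : φ (t - s) ≤ ε' := by
        refine (hT₁ (t - s) ?_).le
        have := hs.2
        linarith
      exact mul_le_mul_of_nonneg_right hφle (mul_nonneg hK0 (Real.exp_pos _).le)
    have hmono2 : (∫ s in (t / 2)..t, b s)
        ≤ ∫ s in (t / 2)..t, B * (K * Real.exp (μ * s)) := by
      apply intervalIntegral.integral_mono_on ht22 hI2 hIe2
      intro s hs
      refine le_trans (hbnd t s (le_trans ht2 hs.1)) ?_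
      have hφle : φ (t - s) ≤ B := by
        refine hB (t - s) ?_
        have := hs.2
        linarith
      exact mul_le_mul_of_nonneg_right hφle (mul_nonneg hK0 (Real.exp_pos _).le)
    have hval1 : (∫ s in (0 : ℝ)..(t / 2), ε' * (K * Real.exp (μ * s))) ≤ ε' * K / ν := by
      have h7 : (∫ s in (0 : ℝ)..(t / 2), ε' * (K * Real.exp (μ * s)))
          = ε' * K * ∫ s in (0 : ℝ)..(t / 2), Real.exp (μ * s) := by
        rw [← intervalIntegral.integral_const_mul]
        congr 1; funext s; ring
      rw [h7]
      have h8 := intExp_le hμν hν 0 (t / 2)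
      rw [mul_zero, Real.exp_zero] at h8
      calc ε' * K * ∫ s in (0 : ℝ)..(t / 2), Real.exp (μ * s)
          ≤ ε' * K * (1 / ν) := mul_le_mul_of_nonneg_left h8 (by positivity)
        _ = ε' * K / ν := by ring
    have hval2 : (∫ s in (t / 2)..t, B * (K * Real.exp (μ * s)))
        ≤ B * K * Real.exp (μ * (t / 2)) / ν := by
      have h7 : (∫ s in (t / 2)..t, B * (K * Real.exp (μ * s)))
          = B * K * ∫ s in (t / 2)..t, Real.exp (μ * s) := by
        rw [← intervalIntegral.integral_const_mul]
        congr 1; funext s; ring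
      rw [h7]
      have h8 := intExp_le hμν hν (t / 2) t
      calc B * K * ∫ s in (t / 2)..t, Real.exp (μ * s)
          ≤ B * K * (Real.exp (μ * (t / 2)) / ν) :=
            mul_le_mul_of_nonneg_left h8 (mul_nonneg hB0 hK0)
        _ = B * K * Real.exp (μ * (t / 2)) / ν := by ring
    have hfirst : ε' * K / ν < ε / 2 := by
      have hden : (0 : ℝ) < 2 * (K + 1) := by linarith
      have hν0 : ν ≠ 0 := ne_of_gt hν
      have heq : ε' * K / ν = ε * K / (2 * (K + 1)) := by
        rw [hε'def]; field_simp
      rw [heq, div_lt_iff₀ hden]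
      nlinarith [hε, hK0]
    calc ‖∫ s in (0 : ℝ)..t, ((E (t - s)) - P).mulVec (g s)‖
        ≤ ∫ s in (0 : ℝ)..t, b s := hIn
      _ = (∫ s in (0 : ℝ)..(t / 2), b s) + ∫ s in (t / 2)..t, b s := hadd
      _ ≤ (ε' * K / ν) + B * K * Real.exp (μ * (t / 2)) / ν := by
          have := hmono1.trans hval1
          have := hmono2.trans hval2
          linarith [hmono1.trans hval1, hmono2.trans hval2]
      _ < ε / 2 + ε / 2 := by linarith [hfirst, hlt2]
      _ = ε := by ring
  -- combine
  have hPIlim : Tendsto (fun t : ℝ => P.mulVec (∫ s in (0 : ℝ)..t, g s))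
      atTop (𝓝 (P.mulVec Iinf)) :=
    (((Matrix.mulVecLin P).toContinuousLinearMap).continuous.tendsto Iinf).comp hHt
  have hT2 : Tendsto (fun t => ∫ s in (0 : ℝ)..t, (E (t - s)).mulVec (g s))
      atTop (𝓝 (P.mulVec Iinf)) := by
    have h := hG.add hPIlim
    rw [zero_add] at h
    apply h.congr'
    filter_upwards [eventually_ge_atTop (0 : ℝ)] with t ht
    exact (hsplit t ht).symm
  have hylim : Tendsto y atTop (𝓝 (P.mulVec lam - P.mulVec Iinf)) := by
    have h := hT1.sub hT2
    apply h.congr'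
    filter_upwards [eventually_ge_atTop (0 : ℝ)] with t ht
    exact (hduh t ht).symm
  -- identify the limit
  set κ : ℝ := (∑ j, η j * lam j) - ∑ j, η j * Iinf j with hκdef
  have hPmv : ∀ x : Fin k → ℝ, ∀ i, (P.mulVec x) i = ξ i * ∑ j, η j * x j := by
    intro x i
    simp [Matrix.mulVec, dotProduct, hP, Finset.mul_sum, mul_assoc]
  have hLκ : P.mulVec lam - P.mulVec Iinf = κ • ξ := by
    funext i
    simp only [Pi.sub_apply, Pi.smul_apply, smul_eq_mul, hPmv, hκdef]
    ring
  -- positivity of κ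
  have hκpos : 0 < κ := by
    set v : ℝ → ℝ := fun t => ∑ i, η i * y t i with hvdef
    have hvlim : Tendsto v atTop (𝓝 (∑ i, η i * (P.mulVec lam - P.mulVec Iinf) i)) :=
      tendsto_finset_sum _ fun i _ =>
        tendsto_const_nhds.mul (((continuous_apply i).tendsto _).comp hylim)
    have hsumκ : ∑ i, η i * (P.mulVec lam - P.mulVec Iinf) i = κ := by
      rw [hLκ]
      have h1 : ∑ i, η i * (κ • ξ) i = κ * ∑ i, ξ i * η i := by
        rw [Finset.mul_sum]
        exact Finset.sum_congr rfl fun i _ => by simp only [Pi.smul_apply, smul_eq_mul]; ring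
      rw [h1, hnormal, mul_one]
    have hκlim : Tendsto v atTop (𝓝 κ) := hsumκ ▸ hvlim
    -- left eigenvector of A is zero
    have hηA : Matrix.vecMul η A = 0 := by
      rw [hA, Matrix.vecMul_sub, hleft]
      have h2 : Matrix.vecMul η (μ • (1 : Matrix (Fin k) (Fin k) ℝ)) = μ • η := by
        funext j
        simp [Matrix.vecMul, dotProduct, Matrix.smul_apply, Matrix.one_apply,
          mul_ite, Finset.sum_ite_eq', mul_comm]
      rw [h2, sub_self]
    -- derivative of v
    have hvd : ∀ t ∈ Set.Ici (0 : ℝ), HasDerivAt v (-(∑ i, η i * g t i)) t := by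
      intro t ht
      have h := HasDerivAt.fun_sum (𝕜 := ℝ) (fun i (_ : i ∈ Finset.univ) =>
        ((hasDerivAt_pi.1 (hyd t ht) i).const_mul (η i)))
      have heq : (∑ i, η i * ((A.mulVec (y t) - g t) i)) = -(∑ i, η i * g t i) := by
        have hswap : ∑ i, η i * (A.mulVec (y t)) i
            = ∑ j, (Matrix.vecMul η A) j * y t j := by
          simp only [Matrix.mulVec, Matrix.vecMul, dotProduct, Finset.mul_sum,
            Finset.sum_mul]
          rw [Finset.sum_comm]
          exact Finset.sum_congr rfl fun j _ => Finset.sum_congr rfl fun i _ => by ring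
        simp only [Pi.sub_apply, mul_sub, Finset.sum_sub_distrib]
        rw [hswap, hηA]
        simp
      exact heq ▸ h
    set ρ : ℝ := c / 2 * (C * Ξ) with hρdef
    have hρ0 : 0 ≤ ρ := mul_nonneg (by linarith) (mul_nonneg hCpos.le hΞpos.le)
    have hvnn : ∀ t, 0 ≤ t → 0 ≤ v t := by
      intro t ht
      exact Finset.sum_nonneg fun i _ => mul_nonneg (hηpos i).le
        (mul_nonneg (Real.exp_pos _).le (hunonneg t ht i))
    have hgv : ∀ t, 0 ≤ t → (∑ i, η i * g t i) ≤ ρ * Real.exp (μ * t) * v t := by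
      intro t ht
      have hrw : ρ * Real.exp (μ * t) * v t = ∑ i, ρ * Real.exp (μ * t) * (η i * y t i) := by
        rw [hvdef]; rw [Finset.mul_sum]
      rw [hrw]
      apply Finset.sum_le_sum
      intro i _
      have hu0 := hunonneg t ht i
      have hub' := hub t ht i
      have he' := Real.exp_pos (-(μ * t))
      have hgi : g t i = Real.exp (-(μ * t)) * (c / 2 * (u t i * u t i)) := rfl
      have hyi : y t i = Real.exp (-(μ * t)) * u t i := rfl
      rw [hgi, hyi, hρdef]
      have h3 : u t i * u t i ≤ u t i * (C * Real.exp (μ * t) * Ξ) :=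
        mul_le_mul_of_nonneg_left hub' hu0
      have h4 : c / 2 * (u t i * u t i) ≤ c / 2 * (u t i * (C * Real.exp (μ * t) * Ξ)) :=
        mul_le_mul_of_nonneg_left h3 (by linarith)
      have h5 := mul_le_mul_of_nonneg_left h4 he'.le
      have h6 := mul_le_mul_of_nonneg_left h5 (hηpos i).le
      refine le_trans h6 (le_of_eq ?_)
      ring
    have hv00 : v 0 = ∑ i, η i * lam i := by
      simp only [hvdef]
      exact Finset.sum_congr rfl fun i _ => by rw [hy0]
    have hv0pos : 0 < v 0 := by
      rw [hv00]
      obtain ⟨i0, hi0⟩ := Function.ne_iff.1 hlam0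
      exact Finset.sum_pos' (fun i _ => mul_nonneg (hηpos i).le (hlam i))
        ⟨i0, Finset.mem_univ i0, mul_pos (hηpos i0) (lt_of_le_of_ne (hlam i0) (Ne.symm hi0))⟩
    set W : ℝ → ℝ := fun t => Real.exp (ρ * (Real.exp (μ * t) - 1) / μ) with hWdef
    have hWpos : ∀ t, 0 < W t := fun t => Real.exp_pos _
    have hWd : ∀ t, HasDerivAt W (W t * (ρ * Real.exp (μ * t))) t := by
      intro t
      have hμ0 : μ ≠ 0 := ne_of_lt hμ
      have hf : HasDerivAt (fun r : ℝ => ρ * (Real.exp (μ * r) - 1) / μ)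
          (ρ * Real.exp (μ * t)) t := by
        have h1 := (((hasDerivAt_exp_mul μ t).sub_const 1).const_mul ρ).div_const μ
        exact h1.congr_deriv (by rw [mul_left_comm, mul_div_cancel_left₀ _ hμ0])
      have h2 := (Real.hasDerivAt_exp (ρ * (Real.exp (μ * t) - 1) / μ)).comp t hf
      have h3 : HasDerivAt W (Real.exp (ρ * (Real.exp (μ * t) - 1) / μ)
        * (ρ * Real.exp (μ * t))) t := h2
      exact h3
    have hφfd : ∀ t ∈ Set.Ici (0 : ℝ), HasDerivAt (fun r => v r * W r)
        ((-(∑ i, η i * g t i)) * W t + v t * (W t * (ρ * Real.exp (μ * t)))) t :=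
      fun t ht => (hvd t ht).mul (hWd t)
    have hmono : MonotoneOn (fun r => v r * W r) (Set.Ici 0) := by
      apply monotoneOn_of_deriv_nonneg (convex_Ici 0)
      · intro t ht
        exact ((hvd t ht).continuousAt.mul (hWd t).continuousAt).continuousWithinAt
      · intro t ht
        rw [interior_Ici] at ht
        exact (hφfd t (Set.Ioi_subset_Ici_self ht)).differentiableAt.differentiableWithinAt
      · intro t ht
        rw [interior_Ici] at ht
        rw [(hφfd t (Set.Ioi_subset_Ici_self ht)).deriv]
        have h7 := hgv t ht.le
        have hW := (hWpos t).le
        nlinarith [mul_nonneg (sub_nonneg.2 h7) hW]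
    have hWle : ∀ t, 0 ≤ t → W t ≤ Real.exp (ρ / ν) := by
      intro t ht
      apply Real.exp_le_exp.2
      rw [hμν, div_neg, ← neg_div]
      exact (div_le_div_iff_of_pos_right hν).mpr
        (by nlinarith [mul_nonneg hρ0 (Real.exp_pos (-ν * t)).le])
    have hlow : ∀ t, 0 ≤ t → v 0 * Real.exp (-(ρ / ν)) ≤ v t := by
      intro t ht
      have h8 : v 0 * W 0 ≤ v t * W t := hmono Set.self_mem_Ici ht ht
      have hW0 : W 0 = 1 := by
        simp [hWdef]
      rw [hW0, mul_one] at h8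
      have h10 : v 0 ≤ v t * Real.exp (ρ / ν) :=
        le_trans h8 (mul_le_mul_of_nonneg_left (hWle t ht) (hvnn t ht))
      have h11 : v 0 / Real.exp (ρ / ν) ≤ v t :=
        (div_le_iff₀ (Real.exp_pos _)).mpr h10
      rw [Real.exp_neg, ← div_eq_mul_inv]
      exact h11
    have hδ : 0 < v 0 * Real.exp (-(ρ / ν)) := mul_pos hv0pos (Real.exp_pos _)
    have hge : v 0 * Real.exp (-(ρ / ν)) ≤ κ :=
      ge_of_tendsto hκlim (by
        filter_upwards [eventually_ge_atTop (0 : ℝ)] with t ht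
        exact hlow t ht)
    linarith
  exact ⟨κ, hκpos, hLκ ▸ hylim⟩
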